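/- Let W be a hypergeometric random variable counting white socks when k socks are drawn without replacement from a drawer of k white and n-k black socks (so P(W = r) = C(k,r)·C(n-k,k-r)/C(n,k)). Then the total variation distance between the law of W and the Poisson distribution with mean k²/n is at most 3k/n. -/

import Mathlib

open ProbabilityTheory
open scoped NNReal

/-- The hypergeometric point probability: `P(W = r) = C(k,r)·C(n-k,k-r)/C(n,k)`. -/
noncomputable def hypergeomPMFReal (n k : ℕ) (r : ℕ) : ℝ :=
  (k.choose r * (n - k).choose (k - r) : ℝ) / (n.choose k : ℝ)

namespace HGPAux

open Real Finset

/-! ### Stein solution machinery for the Poisson distribution -/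

noncomputable def qq (lam : ℝ) (r : ℕ) : ℝ := lam ^ r / r.factorial

noncomputable def poisf (lam : ℝ) (r : ℕ) : ℝ := Real.exp (-lam) * qq lam r

noncomputable def piA (lam : ℝ) (A : Set ℕ) : ℝ := ∑' r, A.indicator (poisf lam) r

noncomputable def indA (A : Set ℕ) (r : ℕ) : ℝ := A.indicator 1 r

noncomputable def hh (lam : ℝ) (A : Set ℕ) (r : ℕ) : ℝ := indA A r - piA lam A

noncomputable def ff (lam : ℝ) (A : Set ℕ) : ℕ → ℝ
  | 0 => 0
  | m + 1 => ((m : ℝ) * ff lam A m + hh lam A m) / lam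

noncomputable def SS (lam : ℝ) (m : ℕ) : ℝ := ∑ r ∈ range m, qq lam r

noncomputable def Ga (lam : ℝ) (A : Set ℕ) (m : ℕ) : ℝ := ∑ r ∈ range m, indA A r * qq lam r

noncomputable def RR (lam : ℝ) (m : ℕ) : ℝ := ∑' j, qq lam (j + m)

noncomputable def Ta (lam : ℝ) (A : Set ℕ) (m : ℕ) : ℝ := ∑' j, indA A (j + m) * qq lam (j + m)

variable {lam : ℝ} {A : Set ℕ}

lemma qq_nonneg (hlam : 0 < lam) (r : ℕ) : 0 ≤ qq lam r :=
  div_nonneg (pow_nonneg hlam.le r) (by positivity)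

lemma hasSum_qq (lam : ℝ) : HasSum (qq lam) (Real.exp lam) := by
  rw [Real.exp_eq_exp_ℝ]
  exact NormedSpace.expSeries_div_hasSum_exp lam

lemma summable_qq (lam : ℝ) : Summable (qq lam) := (hasSum_qq lam).summable

lemma hasSum_poisf (lam : ℝ) : HasSum (poisf lam) 1 := by
  have h := (hasSum_qq lam).mul_left (Real.exp (-lam))
  have : Real.exp (-lam) * Real.exp lam = 1 := by
    rw [← Real.exp_add]; simp
  rwa [this] at h

lemma poisf_nonneg (hlam : 0 < lam) (r : ℕ) : 0 ≤ poisf lam r :=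
  mul_nonneg (Real.exp_nonneg _) (qq_nonneg hlam r)

lemma summable_ind_poisf (lam : ℝ) (A : Set ℕ) : Summable (A.indicator (poisf lam)) :=
  (hasSum_poisf lam).summable.indicator A

lemma piA_nonneg (hlam : 0 < lam) (A : Set ℕ) : 0 ≤ piA lam A :=
  tsum_nonneg fun r => Set.indicator_nonneg (fun i _ => poisf_nonneg hlam i) r

lemma piA_le_one (hlam : 0 < lam) (A : Set ℕ) : piA lam A ≤ 1 := by
  have h1 : piA lam A ≤ ∑' r, poisf lam r := by
    refine Summable.tsum_le_tsum (fun r => ?_) (summable_ind_poisf lam A) (hasSum_poisf lam).summable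
    exact Set.indicator_le_self' (fun i _ => poisf_nonneg hlam i) r
  rwa [(hasSum_poisf lam).tsum_eq] at h1

lemma indA_mul_qq (lam : ℝ) (A : Set ℕ) (r : ℕ) :
    indA A r * qq lam r = Real.exp lam * A.indicator (poisf lam) r := by
  unfold indA poisf
  by_cases h : r ∈ A
  · simp only [Set.indicator_of_mem h, Pi.one_apply, one_mul, ← mul_assoc, ← Real.exp_add]
    simp
  · simp [Set.indicator_of_notMem h]

lemma summable_ind_qq (lam : ℝ) (A : Set ℕ) : Summable (fun r => indA A r * qq lam r) := by
  have : (fun r => indA A r * qq lam r) = fun r => Real.exp lam * A.indicator (poisf lam) r := by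
    funext r; exact indA_mul_qq lam A r
  rw [this]
  exact (summable_ind_poisf lam A).mul_left _

lemma tsum_ind_qq (lam : ℝ) (A : Set ℕ) :
    ∑' r, indA A r * qq lam r = Real.exp lam * piA lam A := by
  have : (fun r => indA A r * qq lam r) = fun r => Real.exp lam * A.indicator (poisf lam) r := by
    funext r; exact indA_mul_qq lam A r
  rw [this, tsum_mul_left, piA]

lemma indA_nonneg (A : Set ℕ) (r : ℕ) : 0 ≤ indA A r :=
  Set.indicator_nonneg (fun _ _ => zero_le_one) r

lemma indA_le_one (A : Set ℕ) (r : ℕ) : indA A r ≤ 1 := by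
  unfold indA
  by_cases h : r ∈ A <;> simp [h]

lemma SS_add_RR (lam : ℝ) (m : ℕ) : SS lam m + RR lam m = Real.exp lam := by
  have h := Summable.sum_add_tsum_nat_add (f := qq lam) m (summable_qq lam)
  rwa [(hasSum_qq lam).tsum_eq] at h

lemma Ga_add_Ta (lam : ℝ) (A : Set ℕ) (m : ℕ) :
    Ga lam A m + Ta lam A m = Real.exp lam * piA lam A := by
  have h := Summable.sum_add_tsum_nat_add (f := fun r => indA A r * qq lam r) m (summable_ind_qq lam A)
  rwa [tsum_ind_qq lam A] at h

lemma RR_nonneg (hlam : 0 < lam) (m : ℕ) : 0 ≤ RR lam m :=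
  tsum_nonneg fun j => qq_nonneg hlam _

lemma Ta_nonneg (hlam : 0 < lam) (A : Set ℕ) (m : ℕ) : 0 ≤ Ta lam A m :=
  tsum_nonneg fun j => mul_nonneg (indA_nonneg A _) (qq_nonneg hlam _)

lemma Ga_nonneg (hlam : 0 < lam) (A : Set ℕ) (m : ℕ) : 0 ≤ Ga lam A m :=
  Finset.sum_nonneg fun r _ => mul_nonneg (indA_nonneg A r) (qq_nonneg hlam r)

lemma SS_succ (lam : ℝ) (m : ℕ) : SS lam (m + 1) = SS lam m + qq lam m := by
  unfold SS; rw [Finset.sum_range_succ]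

lemma Ga_succ (lam : ℝ) (A : Set ℕ) (m : ℕ) :
    Ga lam A (m + 1) = Ga lam A m + indA A m * qq lam m := by
  unfold Ga; rw [Finset.sum_range_succ]

lemma RR_succ (lam : ℝ) (m : ℕ) : RR lam m = qq lam m + RR lam (m + 1) := by
  have h1 := SS_add_RR lam m
  have h2 := SS_add_RR lam (m + 1)
  have h3 := SS_succ lam m
  linarith

lemma qq_zero (lam : ℝ) : qq lam 0 = 1 := by simp [qq]

lemma qq_mul_succ (lam : ℝ) (m : ℕ) : lam * qq lam m = ((m : ℝ) + 1) * qq lam (m + 1) := by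
  unfold qq
  rw [Nat.factorial_succ]
  push_cast
  have hm : ((m : ℝ) + 1) ≠ 0 := by positivity
  field_simp
  ring

lemma I1 (hlam : 0 < lam) (m : ℕ) : lam * SS lam m ≤ (m : ℝ) * SS lam (m + 1) := by
  have e : SS lam (m + 1) = ∑ r ∈ range m, qq lam (r + 1) + qq lam 0 :=
    Finset.sum_range_succ' (fun r => qq lam r) m
  have hterm : ∀ r ∈ range m, lam * qq lam r ≤ (m : ℝ) * qq lam (r + 1) := by
    intro r hr
    rw [qq_mul_succ]
    have : ((r : ℝ) + 1) ≤ (m : ℝ) := by exact_mod_cast Finset.mem_range.mp hr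
    exact mul_le_mul_of_nonneg_right this (qq_nonneg hlam _)
  have h1 : lam * SS lam m ≤ (m : ℝ) * ∑ r ∈ range m, qq lam (r + 1) := by
    unfold SS
    rw [Finset.mul_sum, Finset.mul_sum]
    exact Finset.sum_le_sum hterm
  have h0 : (0:ℝ) ≤ (m : ℝ) * qq lam 0 := mul_nonneg (by positivity) (qq_nonneg hlam 0)
  have : (m : ℝ) * SS lam (m + 1) = (m : ℝ) * ∑ r ∈ range m, qq lam (r + 1) + (m:ℝ) * qq lam 0 := by
    rw [e]; ring
  linarith

lemma qq_le_geom (hlam : 0 < lam) (m i : ℕ) :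
    qq lam (m + 1 + i) ≤ qq lam (m + 1) * (lam / (m + 1)) ^ i := by
  have hfact : ((m + 1).factorial : ℝ) * ((m : ℝ) + 1) ^ i ≤ ((m + 1 + i).factorial : ℝ) := by
    have h := Nat.factorial_mul_pow_le_factorial (m := m + 1) (n := i)
    have h2 : (m + 1).factorial * (m + 1) ^ i ≤ (m + 1).factorial * (m + 1 + 1) ^ i :=
      Nat.mul_le_mul_left _ (Nat.pow_le_pow_left (by omega) i)
    have := le_trans h2 h
    exact_mod_cast this
  unfold qq
  have hpos1 : (0:ℝ) < ((m + 1 + i).factorial : ℝ) := by exact_mod_cast (m + 1 + i).factorial_pos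
  have hpos2 : (0:ℝ) < ((m + 1).factorial : ℝ) * ((m : ℝ) + 1) ^ i := by positivity
  have hnum : (0:ℝ) ≤ lam ^ (m + 1 + i) := pow_nonneg hlam.le _
  calc lam ^ (m + 1 + i) / ((m + 1 + i).factorial : ℝ)
      ≤ lam ^ (m + 1 + i) / (((m + 1).factorial : ℝ) * ((m : ℝ) + 1) ^ i) := by
        exact div_le_div_of_nonneg_left hnum hpos2 hfact
    _ = lam ^ (m + 1) / ((m + 1).factorial : ℝ) * (lam / ((m : ℝ) + 1)) ^ i := by
        rw [pow_add, div_pow]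
        have h1 : (((m + 1).factorial : ℝ)) ≠ 0 := by positivity
        have h2 : (((m : ℝ) + 1)) ^ i ≠ 0 := by positivity
        field_simp


lemma I2 (hlam : 0 < lam) (m : ℕ) : (m : ℝ) * RR lam (m + 1) ≤ lam * RR lam m := by
  rcases le_or_gt (m : ℝ) lam with hml | hml
  · have h1 : RR lam (m + 1) ≤ RR lam m := by
      have := RR_succ lam m
      have := qq_nonneg hlam m
      linarith
    calc (m : ℝ) * RR lam (m + 1) ≤ lam * RR lam (m + 1) :=
          mul_le_mul_of_nonneg_right hml (RR_nonneg hlam _)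
      _ ≤ lam * RR lam m := mul_le_mul_of_nonneg_left h1 hlam.le
  · -- lam < m
    have hr1 : lam / ((m : ℝ) + 1) < 1 := by
      rw [div_lt_one (by positivity)]
      linarith
    have hr0 : 0 ≤ lam / ((m : ℝ) + 1) := by positivity
    have hgeom : RR lam (m + 1) ≤ qq lam (m + 1) * (1 - lam / ((m : ℝ) + 1))⁻¹ := by
      unfold RR
      have hsum : Summable (fun j => qq lam (j + (m + 1))) :=
        ((summable_qq lam).comp_injective (add_left_injective (m+1)))
      have hsum2 : Summable (fun i : ℕ => qq lam (m + 1) * (lam / ((m : ℝ) + 1)) ^ i) :=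
        (summable_geometric_of_lt_one hr0 hr1).mul_left _
      have hle : ∀ j : ℕ, qq lam (j + (m + 1)) ≤ qq lam (m + 1) * (lam / ((m : ℝ) + 1)) ^ j := by
        intro j
        have := qq_le_geom hlam m j
        rwa [show m + 1 + j = j + (m + 1) by omega] at this
      calc (∑' j, qq lam (j + (m + 1))) ≤ ∑' j, qq lam (m + 1) * (lam / ((m : ℝ) + 1)) ^ j :=
            Summable.tsum_le_tsum hle hsum hsum2
        _ = qq lam (m + 1) * (1 - lam / ((m : ℝ) + 1))⁻¹ := by
            rw [tsum_mul_left, tsum_geometric_of_lt_one hr0 hr1]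
    -- key: (m - lam) * RR(m+1) ≤ lam * qq m
    have hq : lam * qq lam m = ((m : ℝ) + 1) * qq lam (m + 1) := qq_mul_succ lam m
    have hden : (0:ℝ) < 1 - lam / ((m : ℝ) + 1) := by linarith
    have hkey : ((m : ℝ) - lam) * RR lam (m + 1) ≤ lam * qq lam m := by
      have h1 : ((m : ℝ) - lam) * RR lam (m + 1)
          ≤ ((m : ℝ) - lam) * (qq lam (m + 1) * (1 - lam / ((m : ℝ) + 1))⁻¹) :=
        mul_le_mul_of_nonneg_left hgeom (by linarith)
      have h2 : ((m : ℝ) - lam) * (qq lam (m + 1) * (1 - lam / ((m : ℝ) + 1))⁻¹)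
          ≤ ((m : ℝ) + 1) * qq lam (m + 1) := by
        have hqn : 0 ≤ qq lam (m + 1) := qq_nonneg hlam _
        have hrw : (1 - lam / ((m : ℝ) + 1)) = ((m : ℝ) + 1 - lam) / ((m : ℝ) + 1) := by
          field_simp
        rw [hrw, inv_div]
        rw [div_eq_mul_inv, ← mul_assoc]
        have hfrac : ((m : ℝ) - lam) * (((m:ℝ)+1) * ((m : ℝ) + 1 - lam)⁻¹) ≤ ((m : ℝ) + 1) := by
          rw [← mul_assoc, mul_inv_le_iff₀ (by linarith)]
          nlinarith
        calc ((m : ℝ) - lam) * qq lam (m+1) * (((m:ℝ)+1) * ((m : ℝ) + 1 - lam)⁻¹)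
            = (((m : ℝ) - lam) * (((m:ℝ)+1) * ((m : ℝ) + 1 - lam)⁻¹)) * qq lam (m+1) := by ring
          _ ≤ ((m : ℝ) + 1) * qq lam (m + 1) := mul_le_mul_of_nonneg_right hfrac hqn
      calc ((m : ℝ) - lam) * RR lam (m + 1)
          ≤ ((m : ℝ) - lam) * (qq lam (m + 1) * (1 - lam / ((m : ℝ) + 1))⁻¹) := h1
        _ ≤ ((m : ℝ) + 1) * qq lam (m + 1) := h2
        _ = lam * qq lam m := hq.symm
    have hRR := RR_succ lam m
    have hRn := RR_nonneg hlam (m + 1)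
    nlinarith [hkey]

lemma ff_succ (lam : ℝ) (A : Set ℕ) (m : ℕ) :
    ff lam A (m + 1) = ((m : ℝ) * ff lam A m + hh lam A m) / lam := rfl

lemma stein_pt (hlam : 0 < lam) (A : Set ℕ) (m : ℕ) :
    lam * ff lam A (m + 1) - (m : ℝ) * ff lam A m = hh lam A m := by
  rw [ff_succ, mul_div_cancel₀ _ (ne_of_gt hlam)]
  ring

lemma ff_formula (hlam : 0 < lam) (A : Set ℕ) :
    ∀ m : ℕ, ff lam A (m + 1)
      = ((m.factorial : ℝ) / lam ^ (m + 1)) * (Ga lam A (m + 1) - piA lam A * SS lam (m + 1)) := by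
  intro m
  induction m with
  | zero =>
      rw [ff_succ]
      unfold Ga SS hh
      simp [qq_zero, Finset.sum_range_one, Nat.factorial]
      ring
  | succ m ih =>
      rw [ff_succ, ih, Ga_succ lam A (m + 1), SS_succ lam (m + 1)]
      unfold hh
      have h1 : ((m + 1).factorial : ℝ) = ((m : ℝ) + 1) * (m.factorial : ℝ) := by
        rw [Nat.factorial_succ]; push_cast; ring
      have h2 : qq lam (m + 1) = lam ^ (m + 1) / ((m + 1).factorial : ℝ) := rfl
      rw [h2, h1]
      have hf : (m.factorial : ℝ) ≠ 0 := by positivity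
      have hl : lam ≠ 0 := ne_of_gt hlam
      have hm1 : ((m : ℝ) + 1) ≠ 0 := by positivity
      push_cast
      field_simp
      ring

lemma ff_diff_le (hlam : 0 < lam) (A : Set ℕ) (m : ℕ) :
    ff lam A (m + 2) - ff lam A (m + 1) ≤ 1 / lam := by
  have hf2 := ff_formula hlam A (m + 1)
  have hf1 := ff_formula hlam A m
  simp only [show m + 1 + 1 = m + 2 from rfl] at hf2
  set al : ℝ := ((m + 1).factorial : ℝ) / lam ^ (m + 2) with hal
  set be : ℝ := (m.factorial : ℝ) / lam ^ (m + 1) with hbe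
  set W : ℝ := al * SS lam (m + 2) - be * SS lam (m + 1) with hW
  clear_value al be W
  have hal_pos : 0 < al := by rw [hal]; positivity
  have hbe_pos : 0 < be := by rw [hbe]; positivity
  -- W ≥ 0 from I1
  have hI1 := I1 hlam (m + 1)
  simp only [show m + 1 + 1 = m + 2 from rfl] at hI1
  have hWn : 0 ≤ W := by
    have hrel : al = ((m : ℝ) + 1) * ((m.factorial : ℝ) / lam ^ (m + 2)) := by
      rw [hal, Nat.factorial_succ]; push_cast; ring
    have hbe2 : be = lam * ((m.factorial : ℝ) / lam ^ (m + 2)) := by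
      rw [hbe]
      have : lam ^ (m + 2) = lam * lam ^ (m + 1) := by ring
      rw [this]
      field_simp
    have hc : (0:ℝ) ≤ (m.factorial : ℝ) / lam ^ (m + 2) := by positivity
    have : W = ((m.factorial : ℝ) / lam ^ (m + 2)) *
        (((m : ℝ) + 1) * SS lam (m + 2) - lam * SS lam (m + 1)) := by
      rw [hW, hrel, hbe2]; ring
    rw [this]
    apply mul_nonneg hc
    have : ((m : ℝ) + 1) = (((m + 1 : ℕ) : ℝ)) := by push_cast; ring
    rw [this]
    linarith [hI1]
  -- E< ≤ 0 from I2
  have hI2 := I2 hlam (m + 1)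
  simp only [show m + 1 + 1 = m + 2 from rfl] at hI2
  have hE : al - be - Real.exp (-lam) * W ≤ 0 := by
    have hS2 := SS_add_RR lam (m + 2)
    have hS1 := SS_add_RR lam (m + 1)
    have hexp : Real.exp (-lam) * Real.exp lam = 1 := by rw [← Real.exp_add]; simp
    have hrw : al - be - Real.exp (-lam) * W
        = Real.exp (-lam) * (al * RR lam (m + 2) - be * RR lam (m + 1)) := by
      rw [hW]
      linear_combination (-(Real.exp (-lam)) * al) * hS2 + (Real.exp (-lam) * be) * hS1
        + (be - al) * hexp
    rw [hrw]
    apply mul_nonpos_of_nonneg_of_nonpos (Real.exp_nonneg _)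
    have hrel : al = ((m : ℝ) + 1) * ((m.factorial : ℝ) / lam ^ (m + 2)) := by
      rw [hal, Nat.factorial_succ]; push_cast; ring
    have hbe2 : be = lam * ((m.factorial : ℝ) / lam ^ (m + 2)) := by
      rw [hbe]
      have : lam ^ (m + 2) = lam * lam ^ (m + 1) := by ring
      rw [this]
      field_simp
    have hc : (0:ℝ) ≤ (m.factorial : ℝ) / lam ^ (m + 2) := by positivity
    have : al * RR lam (m + 2) - be * RR lam (m + 1)
        = ((m.factorial : ℝ) / lam ^ (m + 2)) *
          (((m : ℝ) + 1) * RR lam (m + 2) - lam * RR lam (m + 1)) := by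
      rw [hrel, hbe2]; ring
    rw [this]
    apply mul_nonpos_of_nonneg_of_nonpos hc
    have : ((m : ℝ) + 1) = (((m + 1 : ℕ) : ℝ)) := by push_cast; ring
    rw [this]
    linarith [hI2]
  -- decomposition
  have hGT := Ga_add_Ta lam A (m + 2)
  have hexp : Real.exp (-lam) * Real.exp lam = 1 := by rw [← Real.exp_add]; simp
  have hpi : piA lam A = Real.exp (-lam) * (Ga lam A (m + 2) + Ta lam A (m + 2)) := by
    have := congrArg (fun x => Real.exp (-lam) * x) hGT
    rw [this, ← mul_assoc, hexp, one_mul]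
  have hdelta : ff lam A (m + 2) - ff lam A (m + 1)
      = Ga lam A (m + 1) * (al - be - Real.exp (-lam) * W)
        + indA A (m + 1) * qq lam (m + 1) * (al - Real.exp (-lam) * W)
        - Ta lam A (m + 2) * (Real.exp (-lam) * W) := by
    rw [hf2, hf1, hpi, Ga_succ lam A (m + 1)]
    rw [hW]
    ring
  have hGa := Ga_nonneg hlam A (m + 1)
  have hTa := Ta_nonneg hlam A (m + 2)
  have hq : 0 ≤ qq lam (m + 1) := qq_nonneg hlam _
  have hiq : 0 ≤ indA A (m + 1) * qq lam (m + 1) := mul_nonneg (indA_nonneg A _) hq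
  have hWexp : 0 ≤ Real.exp (-lam) * W := mul_nonneg (Real.exp_nonneg _) hWn
  have hqa : qq lam (m + 1) * al = 1 / lam := by
    rw [hal]
    unfold qq
    have h1 : ((m + 1).factorial : ℝ) ≠ 0 := by positivity
    field_simp
    ring
  have hmid : indA A (m + 1) * qq lam (m + 1) * (al - Real.exp (-lam) * W) ≤ 1 / lam := by
    rcases le_or_gt (al - Real.exp (-lam) * W) 0 with hc | hc
    · have hz : indA A (m + 1) * qq lam (m + 1) * (al - Real.exp (-lam) * W) ≤ 0 :=
        mul_nonpos_of_nonneg_of_nonpos hiq hc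
      have hp : (0:ℝ) ≤ 1 / lam := by positivity
      linarith
    · have h1 : indA A (m + 1) * qq lam (m + 1) * (al - Real.exp (-lam) * W)
          ≤ 1 * qq lam (m + 1) * (al - Real.exp (-lam) * W) := by
        apply mul_le_mul_of_nonneg_right _ hc.le
        exact mul_le_mul_of_nonneg_right (indA_le_one A _) hq
      have h2 : 1 * qq lam (m + 1) * (al - Real.exp (-lam) * W) ≤ qq lam (m + 1) * al := by
        rw [one_mul, mul_sub]
        have hz : 0 ≤ qq lam (m + 1) * (Real.exp (-lam) * W) := mul_nonneg hq hWexp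
        linarith
      rw [hqa] at h2
      linarith
  have t1 : Ga lam A (m + 1) * (al - be - Real.exp (-lam) * W) ≤ 0 :=
    mul_nonpos_of_nonneg_of_nonpos hGa hE
  have t3 : 0 ≤ Ta lam A (m + 2) * (Real.exp (-lam) * W) := mul_nonneg hTa hWexp
  rw [hdelta]
  linarith

lemma piA_compl (hlam : 0 < lam) (A : Set ℕ) : piA lam A + piA lam Aᶜ = 1 := by
  unfold piA
  rw [← Summable.tsum_add (summable_ind_poisf lam A) (summable_ind_poisf lam Aᶜ)]
  have : (fun r => A.indicator (poisf lam) r + Aᶜ.indicator (poisf lam) r) = poisf lam := by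
    funext r
    exact congrFun (Set.indicator_self_add_compl A (poisf lam)) r
  rw [this, (hasSum_poisf lam).tsum_eq]

lemma hh_compl (hlam : 0 < lam) (A : Set ℕ) (r : ℕ) :
    hh lam A r + hh lam Aᶜ r = 0 := by
  unfold hh indA
  have h1 : A.indicator (1 : ℕ → ℝ) r + Aᶜ.indicator (1 : ℕ → ℝ) r = 1 :=
    congrFun (Set.indicator_self_add_compl A (1 : ℕ → ℝ)) r
  have h2 := piA_compl hlam A
  linarith

lemma ff_compl (hlam : 0 < lam) (A : Set ℕ) : ∀ m, ff lam A m + ff lam Aᶜ m = 0 := by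
  intro m
  induction m with
  | zero => simp [ff]
  | succ m ih =>
      rw [ff_succ, ff_succ, ← add_div]
      have := hh_compl hlam A m
      have hnum : (m : ℝ) * ff lam A m + hh lam A m + ((m : ℝ) * ff lam Aᶜ m + hh lam Aᶜ m)
          = 0 := by nlinarith [ih, this]
      have : (m : ℝ) * ff lam A m + hh lam A m + ((m : ℝ) * ff lam Aᶜ m + hh lam Aᶜ m) = 
          ((m : ℝ) * ff lam A m + hh lam A m) + ((m : ℝ) * ff lam Aᶜ m + hh lam Aᶜ m) := by ring
      rw [this] at hnum
      rw [div_eq_zero_iff]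
      left
      linarith

lemma abs_ff_diff (hlam : 0 < lam) (A : Set ℕ) (m : ℕ) :
    |ff lam A (m + 2) - ff lam A (m + 1)| ≤ 1 / lam := by
  rw [abs_le]
  constructor
  · have hup := ff_diff_le hlam Aᶜ m
    have h2 := ff_compl hlam A (m + 2)
    have h1 := ff_compl hlam A (m + 1)
    linarith
  · exact ff_diff_le hlam A m


/-! ### Hypergeometric identities -/

noncomputable def hgP (n k : ℕ) (r : ℕ) : ℝ :=
  (k.choose r * (n - k).choose (k - r) : ℕ) / (n.choose k : ℝ)

lemma NV (a b c : ℕ) :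
    (a + b).choose c = ∑ r ∈ range (c + 1), a.choose r * b.choose (c - r) := by
  rw [Nat.add_choose_eq, Finset.Nat.sum_antidiagonal_eq_sum_range_succ_mk]

section HG

variable {n k : ℕ} (hk : 0 < k) (h2k : 2 * k ≤ n)

lemma hkn (h2k : 2 * k ≤ n) : k ≤ n := by omega

lemma Cnk_pos (h2k : 2 * k ≤ n) : 0 < n.choose k := Nat.choose_pos (by omega)

lemma Cnk_pos' (h2k : 2 * k ≤ n) : (0:ℝ) < (n.choose k : ℝ) := by
  exact_mod_cast Cnk_pos h2k

lemma hgP_nonneg (n k r : ℕ) : 0 ≤ hgP n k r := by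
  unfold hgP; positivity

lemma hgP_zero {r : ℕ} (hr : k < r) : hgP n k r = 0 := by
  unfold hgP
  rw [Nat.choose_eq_zero_of_lt hr]
  simp

lemma den_pos (h2k : 2 * k ≤ n) (s : ℕ) : (0:ℝ) < (n:ℝ) - 2*k + s + 1 := by
  have : (2*k : ℝ) ≤ (n : ℝ) := by exact_mod_cast h2k
  push_cast
  nlinarith [Nat.cast_nonneg (α := ℝ) s]

lemma N1 (h2k : 2 * k ≤ n) {s : ℕ} (hs : s < k) :
    (s+1) * (k.choose (s+1) * (n-k).choose (k-(s+1))) * (n-2*k+s+1)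
      = (k.choose s * (n-k).choose (k-s)) * ((k-s)*(k-s)) := by
  have e1 : k.choose (s+1) * (s+1) = k.choose s * (k-s) := Nat.choose_succ_right_eq k s
  have e2 : (n-k).choose (k-s) * (k-s) = (n-k).choose (k-(s+1)) * (n-2*k+s+1) := by
    have h1 : k - s = (k-(s+1))+1 := by omega
    rw [h1, Nat.choose_succ_right_eq]
    congr 1
    omega
  calc (s+1) * (k.choose (s+1) * (n-k).choose (k-(s+1))) * (n-2*k+s+1)
      = (k.choose (s+1) * (s+1)) * ((n-k).choose (k-(s+1)) * (n-2*k+s+1)) := by ring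
    _ = (k.choose s * (k-s)) * ((n-k).choose (k-s) * (k-s)) := by rw [e1, ← e2]
    _ = (k.choose s * (n-k).choose (k-s)) * ((k-s)*(k-s)) := by ring

lemma R1 (hk : 0 < k) (h2k : 2 * k ≤ n) (s : ℕ) :
    ((s:ℝ)+1) * hgP n k (s+1) * ((n:ℝ) - 2*k + s + 1)
      = hgP n k s * ((k:ℝ) - s)^2 := by
  by_cases hs : s < k
  · have hC := Cnk_pos' h2k
    have hCne : (n.choose k : ℝ) ≠ 0 := ne_of_gt hC
    have cast1 : ((k - s : ℕ) : ℝ) = (k:ℝ) - s := by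
      rw [Nat.cast_sub hs.le]
    have cast2 : ((n - 2*k + s + 1 : ℕ) : ℝ) = (n:ℝ) - 2*k + s + 1 := by
      push_cast [Nat.cast_sub h2k]
      ring
    have key := N1 h2k hs
    have keyR := congrArg (Nat.cast : ℕ → ℝ) key
    push_cast [Nat.cast_sub hs.le, Nat.cast_sub h2k] at keyR
    unfold hgP
    field_simp
    push_cast
    linear_combination keyR
  · have h1 : hgP n k (s+1) = 0 := hgP_zero (by omega)
    by_cases hsk : s = k
    · subst hsk
      rw [h1]
      simp
    · have h2 : hgP n k s = 0 := hgP_zero (by omega)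
      rw [h1, h2]
      ring

lemma S4 (hk : 0 < k) (h2k : 2 * k ≤ n) (g : ℕ → ℝ) :
    ∑ s ∈ range (k+1), hgP n k s * (((k:ℝ) - s)^2 / ((n:ℝ) - 2*k + s + 1)) * g (s+1)
      = ∑ r ∈ range (k+1), (r:ℝ) * hgP n k r * g r := by
  rw [Finset.sum_range_succ, Finset.sum_range_succ' (fun r => (r:ℝ) * hgP n k r * g r) k]
  have hlast : hgP n k k * (((k:ℝ) - k)^2 / ((n:ℝ) - 2*k + k + 1)) * g (k+1) = 0 := by
    simp
  have hzero : ((0:ℕ):ℝ) * hgP n k 0 * g 0 = 0 := by simp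
  rw [hlast, hzero, add_zero, add_zero]
  apply Finset.sum_congr rfl
  intro t ht
  have hden := den_pos h2k t
  have hr := R1 hk h2k t
  have heq : hgP n k t * (((k:ℝ) - t)^2 / ((n:ℝ) - 2*k + t + 1)) = ((t:ℝ)+1) * hgP n k (t+1) := by
    rw [eq_comm, ← sub_eq_zero]
    have hrw : ((t:ℝ)+1) * hgP n k (t+1) - hgP n k t * (((k:ℝ) - t)^2 / ((n:ℝ) - 2*k + t + 1))
        = (((t:ℝ)+1) * hgP n k (t+1) * ((n:ℝ) - 2*k + t + 1) - hgP n k t * ((k:ℝ) - t)^2)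
          / ((n:ℝ) - 2*k + t + 1) := by
      rw [sub_div, mul_div_cancel_right₀ _ (ne_of_gt hden)]; ring
    rw [hrw, hr]
    simp
  calc hgP n k t * (((k:ℝ) - t)^2 / ((n:ℝ) - 2*k + t + 1)) * g (t+1)
      = (((t:ℝ)+1) * hgP n k (t+1)) * g (t+1) := by rw [heq]
    _ = ((t+1 : ℕ):ℝ) * hgP n k (t+1) * g (t+1) := by push_cast; ring

lemma S1 (hk : 0 < k) (h2k : 2 * k ≤ n) :
    ∑ r ∈ range (k+1), hgP n k r = 1 := by
  have hN2 : ∑ r ∈ range (k+1), k.choose r * (n-k).choose (k-r) = n.choose k := by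
    have := NV k (n-k) k
    rw [Nat.add_sub_cancel' (hkn h2k)] at this
    exact this.symm
  unfold hgP
  rw [← Finset.sum_div]
  rw [show ∑ r ∈ range (k+1), ((k.choose r * (n-k).choose (k-r) : ℕ) : ℝ)
      = ((∑ r ∈ range (k+1), k.choose r * (n-k).choose (k-r) : ℕ) : ℝ) by push_cast; rfl]
  rw [hN2]
  exact div_self (ne_of_gt (Cnk_pos' h2k))

lemma N3 (hk : 0 < k) (h2k : 2 * k ≤ n) :
    ∑ r ∈ range (k+1), r * (k.choose r * (n-k).choose (k-r)) = k * (n-1).choose (k-1) := by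
  obtain ⟨k', rfl⟩ : ∃ k', k = k' + 1 := ⟨k - 1, by omega⟩
  rw [Finset.sum_range_succ' (fun r => r * ((k'+1).choose r * (n-(k'+1)).choose (k'+1-r))) (k'+1)]
  simp only [Nat.zero_eq, zero_mul, add_zero, Nat.mul_zero]
  have hterm : ∀ t, (t+1) * ((k'+1).choose (t+1) * (n-(k'+1)).choose (k'+1-(t+1)))
      = (k'+1) * (k'.choose t * (n-(k'+1)).choose (k'-t)) := by
    intro t
    have e1 : (k'+1) * k'.choose t = (k'+1).choose (t+1) * (t+1) := Nat.add_one_mul_choose_eq k' t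
    have e2 : k'+1-(t+1) = k'-t := by omega
    rw [e2]
    calc (t+1) * ((k'+1).choose (t+1) * (n-(k'+1)).choose (k'-t))
        = ((k'+1).choose (t+1) * (t+1)) * (n-(k'+1)).choose (k'-t) := by ring
      _ = ((k'+1) * k'.choose t) * (n-(k'+1)).choose (k'-t) := by rw [← e1]
      _ = (k'+1) * (k'.choose t * (n-(k'+1)).choose (k'-t)) := by ring
  rw [Finset.sum_congr rfl (fun t _ => hterm t), ← Finset.mul_sum]
  have hV : ∑ t ∈ range (k'+1), k'.choose t * (n-(k'+1)).choose (k'-t) = (n-1).choose k' := by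
    have := NV k' (n-(k'+1)) k'
    rw [show k' + (n-(k'+1)) = n - 1 by omega] at this
    exact this.symm
  rw [hV]
  congr 1

lemma N4 (h2k : 2 * k ≤ n) (hk2 : 2 ≤ k) :
    ∑ r ∈ range (k+1), (r*(r-1)) * (k.choose r * (n-k).choose (k-r))
      = (k*(k-1)) * (n-2).choose (k-2) := by
  obtain ⟨k', rfl⟩ : ∃ k', k = k' + 2 := ⟨k - 2, by omega⟩
  rw [Finset.sum_range_succ' (fun r => (r*(r-1)) * ((k'+2).choose r * (n-(k'+2)).choose (k'+2-r))) (k'+2)]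
  rw [Finset.sum_range_succ' (fun i => ((i+1)*(i+1-1)) * ((k'+2).choose (i+1) * (n-(k'+2)).choose (k'+2-(i+1)))) (k'+1)]
  simp only [Nat.zero_eq, Nat.sub_self, mul_zero, zero_mul, add_zero, Nat.mul_zero]
  have hterm : ∀ t, ((t+1+1)*(t+1+1-1)) * ((k'+2).choose (t+1+1) * (n-(k'+2)).choose (k'+2-(t+1+1)))
      = ((k'+2)*(k'+1)) * (k'.choose t * (n-(k'+2)).choose (k'-t)) := by
    intro t
    have e1 : (k'+2) * (k'+1).choose (t+1) = (k'+2).choose (t+2) * (t+2) :=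
      Nat.add_one_mul_choose_eq (k'+1) (t+1)
    have e2 : (k'+1) * k'.choose t = (k'+1).choose (t+1) * (t+1) := Nat.add_one_mul_choose_eq k' t
    have e3 : k'+2-(t+1+1) = k'-t := by omega
    have e4 : t+1+1-1 = t+1 := by omega
    rw [e3, e4, show t+1+1 = t+2 from rfl]
    calc (t+2)*(t+1) * ((k'+2).choose (t+2) * (n-(k'+2)).choose (k'-t))
        = ((k'+2).choose (t+2) * (t+2)) * (t+1) * (n-(k'+2)).choose (k'-t) := by ring
      _ = ((k'+2) * (k'+1).choose (t+1)) * (t+1) * (n-(k'+2)).choose (k'-t) := by rw [← e1]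
      _ = (k'+2) * ((k'+1).choose (t+1) * (t+1)) * (n-(k'+2)).choose (k'-t) := by ring
      _ = (k'+2) * ((k'+1) * k'.choose t) * (n-(k'+2)).choose (k'-t) := by rw [← e2]
      _ = ((k'+2)*(k'+1)) * (k'.choose t * (n-(k'+2)).choose (k'-t)) := by ring
  rw [Finset.sum_congr rfl (fun t _ => hterm t), ← Finset.mul_sum]
  have hV : ∑ t ∈ range (k'+1), k'.choose t * (n-(k'+2)).choose (k'-t) = (n-2).choose k' := by
    have := NV k' (n-(k'+2)) k'
    rw [show k' + (n-(k'+2)) = n - 2 by omega] at this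
    exact this.symm
  rw [hV]
  congr 1

lemma S2 (hk : 0 < k) (h2k : 2 * k ≤ n) :
    ∑ r ∈ range (k+1), (r:ℝ) * hgP n k r = (k:ℝ)^2 / n := by
  have hnum : n * (k * (n-1).choose (k-1)) = k^2 * n.choose k := by
    have e : n * (n-1).choose (k-1) = n.choose k * k := by
      have := Nat.add_one_mul_choose_eq (n-1) (k-1)
      rw [show n-1+1 = n by omega, show k-1+1 = k by omega] at this
      exact this
    calc n * (k * (n-1).choose (k-1)) = k * (n * (n-1).choose (k-1)) := by ring
      _ = k * (n.choose k * k) := by rw [e]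
      _ = k^2 * n.choose k := by ring
  have hsum : ∑ r ∈ range (k+1), (r:ℝ) * hgP n k r
      = ((∑ r ∈ range (k+1), r * (k.choose r * (n-k).choose (k-r)) : ℕ) : ℝ) / (n.choose k : ℝ) := by
    calc ∑ r ∈ range (k+1), (r:ℝ) * hgP n k r
        = ∑ r ∈ range (k+1),
            ((r * (k.choose r * (n-k).choose (k-r)) : ℕ) : ℝ) / (n.choose k : ℝ) := by
          apply Finset.sum_congr rfl
          intro r _
          unfold hgP
          push_cast
          ring
      _ = _ := by rw [← Finset.sum_div, Nat.cast_sum]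
  rw [hsum, N3 hk h2k]
  have hC := Cnk_pos' h2k
  have hn : (0:ℝ) < (n:ℝ) := by
    have : 0 < n := by omega
    exact_mod_cast this
  rw [div_eq_div_iff (ne_of_gt hC) (ne_of_gt hn)]
  have := congrArg (Nat.cast : ℕ → ℝ) hnum
  push_cast at this
  push_cast
  linear_combination this

lemma cast_sq_sub (r : ℕ) : ((r:ℝ)^2 - r) = ((r*(r-1) : ℕ) : ℝ) := by
  cases r with
  | zero => simp
  | succ s => push_cast [Nat.succ_sub_one]; ring

lemma S3 (hk : 0 < k) (h2k : 2 * k ≤ n) :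
    ∑ r ∈ range (k+1), ((r:ℝ)^2 - r) * hgP n k r
      = (k:ℝ)^2 * ((k:ℝ)-1)^2 / ((n:ℝ) * ((n:ℝ)-1)) := by
  have hC := Cnk_pos' h2k
  have hn : (0:ℝ) < (n:ℝ) := by
    exact_mod_cast (show (0:ℕ) < n by omega)
  have hn1 : (0:ℝ) < (n:ℝ) - 1 := by
    have : 2 ≤ n := by omega
    have : (2:ℝ) ≤ (n:ℝ) := by exact_mod_cast this
    linarith
  have hsum : ∑ r ∈ range (k+1), ((r:ℝ)^2 - r) * hgP n k r
      = ((∑ r ∈ range (k+1), (r*(r-1)) * (k.choose r * (n-k).choose (k-r)) : ℕ) : ℝ)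
        / (n.choose k : ℝ) := by
    calc ∑ r ∈ range (k+1), ((r:ℝ)^2 - r) * hgP n k r
        = ∑ r ∈ range (k+1),
            (((r*(r-1)) * (k.choose r * (n-k).choose (k-r)) : ℕ) : ℝ) / (n.choose k : ℝ) := by
          apply Finset.sum_congr rfl
          intro r _
          unfold hgP
          rw [show (((r*(r-1)) * (k.choose r * (n-k).choose (k-r)) : ℕ) : ℝ)
            = ((r*(r-1) : ℕ) : ℝ) * ((k.choose r * (n-k).choose (k-r) : ℕ) : ℝ) by push_cast; ring]
          rw [← cast_sq_sub r]
          ring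
      _ = _ := by rw [← Finset.sum_div, Nat.cast_sum]
  rcases lt_or_ge k 2 with hk1 | hk2
  · -- k = 1
    have hkk : k = 1 := by omega
    subst hkk
    rw [hsum]
    have hz : ∑ r ∈ range 2, (r*(r-1)) * (Nat.choose 1 r * (n-1).choose (1-r)) = 0 := by
      simp [Finset.sum_range_succ]
    rw [hz]
    push_cast
    simp
  · have hnum : (n*(n-1)) * ((k*(k-1)) * (n-2).choose (k-2)) = (k*(k-1))^2 * n.choose k := by
      have e1 : (n-1) * (n-2).choose (k-2) = (n-1).choose (k-1) * (k-1) := by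
        have := Nat.add_one_mul_choose_eq (n-2) (k-2)
        rw [show n-2+1 = n-1 by omega, show k-2+1 = k-1 by omega] at this
        exact this
      have e2 : n * (n-1).choose (k-1) = n.choose k * k := by
        have := Nat.add_one_mul_choose_eq (n-1) (k-1)
        rw [show n-1+1 = n by omega, show k-1+1 = k by omega] at this
        exact this
      calc (n*(n-1)) * ((k*(k-1)) * (n-2).choose (k-2))
          = (k*(k-1)) * n * ((n-1) * (n-2).choose (k-2)) := by ring
        _ = (k*(k-1)) * n * ((n-1).choose (k-1) * (k-1)) := by rw [e1]
        _ = (k*(k-1)) * (k-1) * (n * (n-1).choose (k-1)) := by ring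
        _ = (k*(k-1)) * (k-1) * (n.choose k * k) := by rw [e2]
        _ = (k*(k-1))^2 * n.choose k := by ring
    rw [hsum, N4 h2k hk2]
    rw [div_eq_div_iff (ne_of_gt hC) (by positivity)]
    have := congrArg (Nat.cast : ℕ → ℝ) hnum
    push_cast [Nat.cast_sub (show 1 ≤ k by omega), Nat.cast_sub (show 1 ≤ n by omega),
      Nat.cast_sub (show 2 ≤ n by omega)] at this
    push_cast [Nat.cast_sub (show 1 ≤ k by omega), Nat.cast_sub (show 2 ≤ n by omega)]
    linear_combination this


end HG

noncomputable def ccf (n k : ℕ) (s : ℕ) : ℝ :=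
  (k:ℝ)^2/(n:ℝ) - ((k:ℝ) - s)^2 / ((n:ℝ) - 2*k + s + 1)

noncomputable def aP (n k : ℕ) (s : ℕ) : ℝ := hgP n k s * ccf n k s

noncomputable def TTf (n k : ℕ) (m : ℕ) : ℝ := ∑ s ∈ Ico m (k+1), aP n k s

lemma tri (N : ℕ) (F : ℕ → ℕ → ℝ) :
    ∑ s ∈ range N, ∑ i ∈ range s, F s i = ∑ i ∈ range N, ∑ s ∈ Ico (i+1) N, F s i := by
  induction N with
  | zero => simp
  | succ N ih =>
      rw [Finset.sum_range_succ, ih, Finset.sum_range_succ]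
      rw [Finset.Ico_self, Finset.sum_empty, add_zero, ← Finset.sum_add_distrib]
      apply Finset.sum_congr rfl
      intro i hi
      rw [Finset.mem_range] at hi
      rw [Finset.sum_Ico_succ_top (by omega : i + 1 ≤ N)]

section HG2

variable {n k : ℕ}

lemma ccf_mono (h2k : 2 * k ≤ n) {s t : ℕ} (hst : s ≤ t) (htk : t ≤ k) :
    ccf n k s ≤ ccf n k t := by
  unfold ccf
  have hds := den_pos h2k s
  have hdt := den_pos h2k t
  apply sub_le_sub_left
  have hstR : (s:ℝ) ≤ (t:ℝ) := by exact_mod_cast hst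
  have htkR : (t:ℝ) ≤ (k:ℝ) := by exact_mod_cast htk
  have h1 : (0:ℝ) ≤ (k:ℝ) - t := by linarith
  have h2 : (k:ℝ) - t ≤ (k:ℝ) - s := by linarith
  have hnum : ((k:ℝ) - t)^2 ≤ ((k:ℝ) - s)^2 := by nlinarith
  have hden : (n:ℝ) - 2*k + s + 1 ≤ (n:ℝ) - 2*k + t + 1 := by linarith
  exact div_le_div₀ (by positivity) hnum hds hden

lemma A1 (hk : 0 < k) (h2k : 2 * k ≤ n) :
    ∑ s ∈ range (k+1), aP n k s = 0 := by
  have h4 := S4 hk h2k (fun _ => (1:ℝ))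
  simp only [mul_one] at h4
  have hexp : ∀ s ∈ range (k+1), aP n k s
      = hgP n k s * ((k:ℝ)^2/(n:ℝ)) - hgP n k s * (((k:ℝ) - s)^2 / ((n:ℝ) - 2*k + s + 1)) := by
    intro s _
    unfold aP ccf
    ring
  rw [Finset.sum_congr rfl hexp, Finset.sum_sub_distrib]
  rw [← Finset.sum_mul, S1 hk h2k, one_mul, h4]
  have h2 := S2 hk h2k
  have : ∀ r ∈ range (k+1), (r:ℝ) * hgP n k r = (r:ℝ) * hgP n k r := fun _ _ => rfl
  linarith [h2]

lemma TT_nonneg (hk : 0 < k) (h2k : 2 * k ≤ n) (m : ℕ) : 0 ≤ TTf n k m := by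
  unfold TTf
  rcases le_or_gt m k with hm | hm
  · by_cases hc : 0 ≤ ccf n k m
    · apply Finset.sum_nonneg
      intro s hs
      rw [Finset.mem_Ico] at hs
      apply mul_nonneg (hgP_nonneg n k s)
      exact le_trans hc (ccf_mono h2k hs.1 (by omega))
    · push_neg at hc
      have hsplit := Finset.sum_range_add_sum_Ico (aP n k) (show m ≤ k+1 by omega)
      have hneg : ∑ s ∈ range m, aP n k s ≤ 0 := by
        apply Finset.sum_nonpos
        intro s hs
        rw [Finset.mem_range] at hs
        apply mul_nonpos_of_nonneg_of_nonpos (hgP_nonneg n k s)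
        exact le_trans (ccf_mono h2k hs.le hm) hc.le
      have hA1 := A1 hk h2k
      linarith
  · rw [Finset.Ico_eq_empty (by omega), Finset.sum_empty]

lemma A6 (hk : 0 < k) (h2k : 2 * k ≤ n) :
    ((k:ℝ)^2/(n:ℝ)) * ((k:ℝ)^2/(n:ℝ)) - (k:ℝ)^2*((k:ℝ)-1)^2/((n:ℝ)*((n:ℝ)-1))
      ≤ 3*((k:ℝ)^2/(n:ℝ))*(k:ℝ)/(n:ℝ) := by
  have hkR : (1:ℝ) ≤ (k:ℝ) := by exact_mod_cast hk
  have hnR : (2:ℝ) ≤ (n:ℝ) := by exact_mod_cast (show 2 ≤ n by omega)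
  have hn : (0:ℝ) < (n:ℝ) := by linarith
  have hn1 : (0:ℝ) < (n:ℝ) - 1 := by linarith
  have main : (0:ℝ) ≤ (k:ℝ)^2 * ((k:ℝ)*(n:ℝ) + (k:ℝ)^2 + (n:ℝ) - 3*(k:ℝ)) := by
    apply mul_nonneg (sq_nonneg _)
    nlinarith
  have key : (k:ℝ)^4*((n:ℝ)-1) - (k:ℝ)^2*((k:ℝ)-1)^2*(n:ℝ) ≤ 3*(k:ℝ)^3*((n:ℝ)-1) := by
    nlinarith [main]
  have expand : ((k:ℝ)^2/(n:ℝ)) * ((k:ℝ)^2/(n:ℝ)) - (k:ℝ)^2*((k:ℝ)-1)^2/((n:ℝ)*((n:ℝ)-1))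
        - 3*((k:ℝ)^2/(n:ℝ))*(k:ℝ)/(n:ℝ)
      = ((k:ℝ)^4*((n:ℝ)-1) - (k:ℝ)^2*((k:ℝ)-1)^2*(n:ℝ) - 3*(k:ℝ)^3*((n:ℝ)-1))
        / ((n:ℝ)^2*((n:ℝ)-1)) := by
    field_simp
  have hnum : (k:ℝ)^4*((n:ℝ)-1) - (k:ℝ)^2*((k:ℝ)-1)^2*(n:ℝ) - 3*(k:ℝ)^3*((n:ℝ)-1) ≤ 0 := by
    linarith
  have hq : ((k:ℝ)^4*((n:ℝ)-1) - (k:ℝ)^2*((k:ℝ)-1)^2*(n:ℝ) - 3*(k:ℝ)^3*((n:ℝ)-1))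
      / ((n:ℝ)^2*((n:ℝ)-1)) ≤ 0 :=
    div_nonpos_of_nonpos_of_nonneg hnum (by positivity)
  linarith [expand ▸ hq]

end HG2

theorem main (n k : ℕ) (hk : 0 < k) (h2k : 2 * k ≤ n) (A : Set ℕ) :
    |(∑' r, A.indicator (hgP n k) r) - piA ((k:ℝ)^2/(n:ℝ)) A| ≤ 3 * (k:ℝ) / (n:ℝ) := by
  classical
  have hn0 : 0 < n := by omega
  have hkR : (0:ℝ) < (k:ℝ) := by exact_mod_cast hk
  have hnR : (0:ℝ) < (n:ℝ) := by exact_mod_cast hn0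
  set lam : ℝ := (k:ℝ)^2/(n:ℝ) with hlam_def
  have hlam : 0 < lam := by rw [hlam_def]; positivity
  -- hypergeometric tsum is a finite sum
  have hμ : (∑' r, A.indicator (hgP n k) r) = ∑ r ∈ range (k+1), indA A r * hgP n k r := by
    rw [tsum_eq_sum (s := range (k+1)) ?_]
    · apply Finset.sum_congr rfl
      intro r _
      unfold indA
      by_cases h : r ∈ A <;> simp [Set.indicator_of_mem, Set.indicator_of_notMem, h]
    · intro r hr
      rw [Finset.mem_range] at hr
      have hz : hgP n k r = 0 := hgP_zero (by omega)
      by_cases h : r ∈ A <;> simp [Set.indicator_of_mem, Set.indicator_of_notMem, h, hz]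
  -- step 1: Stein transformation
  have h5 : (∑' r, A.indicator (hgP n k) r) - piA lam A
      = ∑ s ∈ range (k+1), aP n k s * ff lam A (s+1) := by
    rw [hμ]
    have hstep1 : ∑ r ∈ range (k+1), indA A r * hgP n k r - piA lam A
        = ∑ r ∈ range (k+1), hgP n k r * hh lam A r := by
      have hcong : ∀ r ∈ range (k+1), hgP n k r * hh lam A r
          = indA A r * hgP n k r - hgP n k r * piA lam A := by
        intro r _
        unfold hh
        ring
      rw [Finset.sum_congr rfl hcong, Finset.sum_sub_distrib, ← Finset.sum_mul, S1 hk h2k,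
        one_mul]
    rw [hstep1]
    have hstein : ∀ r ∈ range (k+1), hgP n k r * hh lam A r
        = lam * (hgP n k r * ff lam A (r+1)) - (r:ℝ) * hgP n k r * ff lam A r := by
      intro r _
      rw [← stein_pt hlam A r]
      ring
    rw [Finset.sum_congr rfl hstein, Finset.sum_sub_distrib]
    have h4 := S4 hk h2k (fun j => ff lam A j)
    rw [← h4, ← Finset.sum_sub_distrib]
    apply Finset.sum_congr rfl
    intro s _
    unfold aP ccf
    rw [← hlam_def]
    ring
  -- telescope + swap
  have htel : ∀ s : ℕ, ff lam A (s+1)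
      = ff lam A 1 + ∑ i ∈ range s, (ff lam A (i+2) - ff lam A (i+1)) := by
    intro s
    have h := Finset.sum_range_sub (fun j => ff lam A (j+1)) s
    simp only [show ∀ i : ℕ, i+1+1 = i+2 from fun i => rfl] at h
    linarith
  have h8 : (∑' r, A.indicator (hgP n k) r) - piA lam A
      = ∑ i ∈ range (k+1), (ff lam A (i+2) - ff lam A (i+1)) * TTf n k (i+1) := by
    rw [h5]
    have hcong : ∀ s ∈ range (k+1), aP n k s * ff lam A (s+1)
        = aP n k s * ff lam A 1
          + ∑ i ∈ range s, aP n k s * (ff lam A (i+2) - ff lam A (i+1)) := by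
      intro s _
      rw [htel s, mul_add, Finset.mul_sum]
    rw [Finset.sum_congr rfl hcong, Finset.sum_add_distrib, ← Finset.sum_mul, A1 hk h2k,
      zero_mul, zero_add]
    rw [tri (k+1) (fun s i => aP n k s * (ff lam A (i+2) - ff lam A (i+1)))]
    apply Finset.sum_congr rfl
    intro i _
    rw [← Finset.sum_mul, mul_comm]
    rfl
  -- total mass of the weights
  have h10 : ∑ i ∈ range (k+1), TTf n k (i+1) = ∑ s ∈ range (k+1), (s:ℝ) * aP n k s := by
    have h := tri (k+1) (fun s _ => aP n k s)
    simp only [Finset.sum_const, Finset.card_range, nsmul_eq_mul] at h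
    unfold TTf
    exact h.symm
  have h11 : ∑ s ∈ range (k+1), (s:ℝ) * aP n k s
      = lam * lam - (k:ℝ)^2*((k:ℝ)-1)^2/((n:ℝ)*((n:ℝ)-1)) := by
    have h4b := S4 hk h2k (fun j => (j:ℝ) - 1)
    simp only [Nat.cast_add, Nat.cast_one, add_sub_cancel_right] at h4b
    have hrhs : ∑ r ∈ range (k+1), (r:ℝ) * hgP n k r * ((r:ℝ) - 1)
        = ∑ r ∈ range (k+1), ((r:ℝ)^2 - r) * hgP n k r :=
      Finset.sum_congr rfl (fun r _ => by ring)
    have hcong : ∀ s ∈ range (k+1), (s:ℝ) * aP n k s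
        = lam * ((s:ℝ) * hgP n k s)
          - hgP n k s * (((k:ℝ) - s)^2 / ((n:ℝ) - 2*k + s + 1)) * (s:ℝ) := by
      intro s _
      unfold aP ccf
      rw [← hlam_def]
      ring
    rw [Finset.sum_congr rfl hcong, Finset.sum_sub_distrib, ← Finset.mul_sum, S2 hk h2k,
      h4b, hrhs, S3 hk h2k, ← hlam_def]
  -- absolute value bound
  have habs : |(∑' r, A.indicator (hgP n k) r) - piA lam A|
      ≤ (1/lam) * ∑ i ∈ range (k+1), TTf n k (i+1) := by
    rw [h8, Finset.mul_sum]
    calc |∑ i ∈ range (k+1), (ff lam A (i+2) - ff lam A (i+1)) * TTf n k (i+1)|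
        ≤ ∑ i ∈ range (k+1), |(ff lam A (i+2) - ff lam A (i+1)) * TTf n k (i+1)| :=
          Finset.abs_sum_le_sum_abs _ _
      _ ≤ ∑ i ∈ range (k+1), (1/lam) * TTf n k (i+1) := by
          apply Finset.sum_le_sum
          intro i _
          rw [abs_mul, abs_of_nonneg (TT_nonneg hk h2k (i+1))]
          exact mul_le_mul_of_nonneg_right (abs_ff_diff hlam A i) (TT_nonneg hk h2k (i+1))
  rw [h10, h11] at habs
  have hA6 := A6 hk h2k
  rw [← hlam_def] at hA6
  have hfinal : (1/lam) * (lam * lam - (k:ℝ)^2*((k:ℝ)-1)^2/((n:ℝ)*((n:ℝ)-1)))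
      ≤ (1/lam) * (3*lam*(k:ℝ)/(n:ℝ)) := by
    apply mul_le_mul_of_nonneg_left _ (by positivity)
    linarith [hA6]
  have hsimp : (1/lam) * (3*lam*(k:ℝ)/(n:ℝ)) = 3 * (k:ℝ) / (n:ℝ) := by
    field_simp
  linarith [habs, hfinal, hsimp ▸ hfinal]


end HGPAux


/-- The total variation distance between the hypergeometric distribution (k draws from
k white and n-k black) and the Poisson distribution with mean `k²/n` is at most `3k/n`:
for every set `A ⊆ ℕ` the probabilities differ by at most `3k/n`. -/
theorem hypergeom_poisson_tv (n k : ℕ) (hn : 0 < n) (hk : 0 < k) (h : 2 * k ≤ n)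
    (A : Set ℕ) :
    |(∑' r : ℕ, A.indicator (hypergeomPMFReal n k) r)
      - (∑' r : ℕ, A.indicator (poissonPMFReal ((k : ℝ≥0) ^ 2 / (n : ℝ≥0))) r)|
      ≤ 3 * k / n := by
  have hfun : hypergeomPMFReal n k = HGPAux.hgP n k := funext fun r => by
    unfold hypergeomPMFReal HGPAux.hgP
    push_cast
    ring
  have hpois : poissonPMFReal ((k : ℝ≥0) ^ 2 / (n : ℝ≥0))
      = HGPAux.poisf ((k:ℝ)^2/(n:ℝ)) := funext fun m => by
    unfold poissonPMFReal HGPAux.poisf HGPAux.qq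
    rw [NNReal.coe_div, NNReal.coe_pow, NNReal.coe_natCast, NNReal.coe_natCast]
    ring
  rw [hfun, hpois]
  exact HGPAux.main n k hk h A
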